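/- Let G be a simple graph, v ∈ V(G) a vertex of degree 1 (a leaf) and w its unique neighbour. Let H be the graph obtained from G by deleting both v and w. Then gap(G) = gap(H), i.e., stp(G) = stp(H) + 2. -/

import Mathlib

structure LoopGraph (V : Type*) where
  Adj : V → V → Prop
  symm : ∀ u v, Adj u v → Adj v u

namespace LoopGraph

variable {V : Type*} [Fintype V] [DecidableEq V]

/-- `C` is a set-join cover of `G`: a finite family of set-joins `K ∨ L`
(with `K`, `L` nonempty) whose edge sets union to `E(G)`. -/
def IsCover (G : LoopGraph V) (C : Finset (Finset V × Finset V)) : Prop :=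
  (∀ p ∈ C, p.1.Nonempty ∧ p.2.Nonempty) ∧
  (∀ u v : V, G.Adj u v ↔ ∃ p ∈ C, (u ∈ p.1 ∧ v ∈ p.2) ∨ (u ∈ p.2 ∧ v ∈ p.1))

/-- The component set of a set-join cover: all sets occurring as a part. -/
def sjComponents (C : Finset (Finset V × Finset V)) : Finset (Finset V) :=
  C.image Prod.fst ∪ C.image Prod.snd

/-- The SNT-rank: minimal number of distinct components over all set-join covers. -/
noncomputable def stp (G : LoopGraph V) : ℕ :=
  sInf {n | ∃ C : Finset (Finset V × Finset V), G.IsCover C ∧ (sjComponents C).card = n}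

/-- `gap G = |V(G)| - stp G`. -/
noncomputable def gap (G : LoopGraph V) : ℕ :=
  Fintype.card V - G.stp

/-- No vertices `u₁ ≠ u₂`, `v₁ ≠ v₂` with all four pairs `{uᵢ, vⱼ}` edges. -/
def StronglyC4Free (G : LoopGraph V) : Prop :=
  ¬ ∃ u₁ u₂ v₁ v₂ : V, u₁ ≠ u₂ ∧ v₁ ≠ v₂ ∧
    G.Adj u₁ v₁ ∧ G.Adj u₁ v₂ ∧ G.Adj u₂ v₁ ∧ G.Adj u₂ v₂

/-- Induced subgraph on a finset of vertices. -/
def induce (G : LoopGraph V) (s : Finset V) : LoopGraph {x // x ∈ s} :=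
  ⟨fun a b => G.Adj a b, fun _ _ h => G.symm _ _ h⟩

/-- Degree of a vertex; a loop counts twice. -/
noncomputable def deg (G : LoopGraph V) (x : V) : ℕ :=
  {y | G.Adj x y}.ncard + {y | y = x ∧ G.Adj x y}.ncard

end LoopGraph

open LoopGraph

section Aux
variable {V : Type*} [Fintype V] [DecidableEq V]

lemma lg_exists_cover (G : LoopGraph V) : ∃ C : Finset (Finset V × Finset V), G.IsCover C := by
  classical
  refine ⟨((Finset.univ ×ˢ Finset.univ).filter (fun p : V × V => G.Adj p.1 p.2)).image
      (fun p => ({p.1}, {p.2})), ?_, ?_⟩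
  · intro p hp
    simp only [Finset.mem_image] at hp
    obtain ⟨q, _, rfl⟩ := hp
    exact ⟨⟨q.1, Finset.mem_singleton_self _⟩, ⟨q.2, Finset.mem_singleton_self _⟩⟩
  · intro u u'
    constructor
    · intro h
      exact ⟨({u}, {u'}), Finset.mem_image.mpr ⟨(u, u'), by simp [h], rfl⟩,
        Or.inl ⟨Finset.mem_singleton_self _, Finset.mem_singleton_self _⟩⟩
    · rintro ⟨p, hp, h⟩
      simp only [Finset.mem_image, Finset.mem_filter] at hp
      obtain ⟨q, ⟨-, hq⟩, rfl⟩ := hp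
      simp only [Finset.mem_singleton] at h
      rcases h with ⟨rfl, rfl⟩ | ⟨rfl, rfl⟩
      · exact hq
      · exact G.symm _ _ hq

lemma lg_stp_le {G : LoopGraph V} {C : Finset (Finset V × Finset V)} (h : G.IsCover C) :
    G.stp ≤ (sjComponents C).card :=
  Nat.sInf_le ⟨C, h, rfl⟩

lemma lg_stp_mem (G : LoopGraph V) :
    ∃ C : Finset (Finset V × Finset V), G.IsCover C ∧ (sjComponents C).card = G.stp := by
  obtain ⟨C, hC⟩ := lg_exists_cover G
  exact Nat.sInf_mem (s := {n | ∃ C, G.IsCover C ∧ (sjComponents C).card = n}) ⟨_, C, hC, rfl⟩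

lemma lg_upper (G : LoopGraph V) (v w : V) (hvw : v ≠ w) (hadj : G.Adj v w)
    (huniq : ∀ x, G.Adj v x → x = w) :
    G.stp ≤ (G.induce ({v, w}ᶜ : Finset V)).stp + 2 := by
  classical
  set s : Finset V := ({v, w}ᶜ : Finset V) with hs
  obtain ⟨C, hC, hcard⟩ := lg_stp_mem (G.induce s)
  let f : Finset {x // x ∈ s} → Finset V := fun K => K.image Subtype.val
  let N : Finset V := Finset.univ.filter (fun x => G.Adj w x)
  let C₁ : Finset (Finset V × Finset V) :=
    (C.image (fun p => (f p.1, f p.2))) ∪ {({w}, N)}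
  have hvN : v ∈ N := by
    simp only [N, Finset.mem_filter, Finset.mem_univ, true_and]
    exact G.symm _ _ hadj
  have hcover : G.IsCover C₁ := by
    constructor
    · intro p hp
      rcases Finset.mem_union.mp hp with hp | hp
      · obtain ⟨q, hq, rfl⟩ := Finset.mem_image.mp hp
        exact ⟨((hC.1 q hq).1).image _, ((hC.1 q hq).2).image _⟩
      · rw [Finset.mem_singleton.mp hp]
        exact ⟨⟨w, Finset.mem_singleton_self _⟩, ⟨v, hvN⟩⟩
    · intro u u'
      constructor
      · intro h
        by_cases hu : u = w
        · refine ⟨({w}, N), Finset.mem_union_right _ (Finset.mem_singleton_self _),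
            Or.inl ⟨Finset.mem_singleton.mpr hu, ?_⟩⟩
          simp only [N, Finset.mem_filter, Finset.mem_univ, true_and]
          exact hu ▸ h
        · by_cases hu' : u' = w
          · refine ⟨({w}, N), Finset.mem_union_right _ (Finset.mem_singleton_self _),
              Or.inr ⟨?_, Finset.mem_singleton.mpr hu'⟩⟩
            simp only [N, Finset.mem_filter, Finset.mem_univ, true_and]
            exact hu' ▸ (G.symm _ _ h)
          · have huv : u ≠ v := fun e => hu' (huniq u' (e ▸ h))
            have hu'v : u' ≠ v := fun e => hu (huniq u (G.symm _ _ (e ▸ h)))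
            have hus : u ∈ s := by simp [hs, huv, hu]
            have hu's : u' ∈ s := by simp [hs, hu'v, hu']
            have hadj' : (G.induce s).Adj ⟨u, hus⟩ ⟨u', hu's⟩ := h
            obtain ⟨p, hp, hmem⟩ := (hC.2 _ _).mp hadj'
            refine ⟨(f p.1, f p.2), Finset.mem_union_left _ (Finset.mem_image_of_mem _ hp), ?_⟩
            rcases hmem with ⟨h1, h2⟩ | ⟨h1, h2⟩
            · exact Or.inl ⟨Finset.mem_image_of_mem _ h1, Finset.mem_image_of_mem _ h2⟩
            · exact Or.inr ⟨Finset.mem_image_of_mem _ h1, Finset.mem_image_of_mem _ h2⟩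
      · rintro ⟨p, hp, hmem⟩
        rcases Finset.mem_union.mp hp with hp | hp
        · obtain ⟨q, hq, rfl⟩ := Finset.mem_image.mp hp
          rcases hmem with ⟨h1, h2⟩ | ⟨h1, h2⟩
          · obtain ⟨a, ha, rfl⟩ := Finset.mem_image.mp h1
            obtain ⟨b, hb, rfl⟩ := Finset.mem_image.mp h2
            exact (hC.2 a b).mpr ⟨q, hq, Or.inl ⟨ha, hb⟩⟩
          · obtain ⟨a, ha, rfl⟩ := Finset.mem_image.mp h1
            obtain ⟨b, hb, rfl⟩ := Finset.mem_image.mp h2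
            exact (hC.2 a b).mpr ⟨q, hq, Or.inr ⟨ha, hb⟩⟩
        · rw [Finset.mem_singleton.mp hp] at hmem
          rcases hmem with ⟨h1, h2⟩ | ⟨h1, h2⟩
          · rw [Finset.mem_singleton.mp h1]
            exact (Finset.mem_filter.mp h2).2
          · rw [Finset.mem_singleton.mp h2]
            exact G.symm _ _ (Finset.mem_filter.mp h1).2
  have hsub : sjComponents C₁ ⊆ ((sjComponents C).image f) ∪ {({w} : Finset V), N} := by
    intro K hK
    rcases Finset.mem_union.mp hK with hK | hK
    · obtain ⟨p, hp, rfl⟩ := Finset.mem_image.mp hK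
      rcases Finset.mem_union.mp hp with hp | hp
      · obtain ⟨q, hq, rfl⟩ := Finset.mem_image.mp hp
        exact Finset.mem_union_left _ (Finset.mem_image_of_mem _
          (Finset.mem_union_left _ (Finset.mem_image_of_mem _ hq)))
      · rw [Finset.mem_singleton.mp hp]
        exact Finset.mem_union_right _ (by simp)
    · obtain ⟨p, hp, rfl⟩ := Finset.mem_image.mp hK
      rcases Finset.mem_union.mp hp with hp | hp
      · obtain ⟨q, hq, rfl⟩ := Finset.mem_image.mp hp
        exact Finset.mem_union_left _ (Finset.mem_image_of_mem _
          (Finset.mem_union_right _ (Finset.mem_image_of_mem _ hq)))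
      · rw [Finset.mem_singleton.mp hp]
        exact Finset.mem_union_right _ (by simp)
  have hle : (sjComponents C₁).card ≤ (sjComponents C).card + 2 :=
    calc (sjComponents C₁).card ≤ (((sjComponents C).image f) ∪ {({w} : Finset V), N}).card :=
          Finset.card_le_card hsub
      _ ≤ ((sjComponents C).image f).card + ({({w} : Finset V), N} : Finset (Finset V)).card :=
          Finset.card_union_le _ _
      _ ≤ (sjComponents C).card + 2 := by
          have h1 : ((sjComponents C).image f).card ≤ (sjComponents C).card :=
            Finset.card_image_le
          have h2 : ({({w} : Finset V), N} : Finset (Finset V)).card ≤ 2 := by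
            apply le_trans (Finset.card_insert_le _ _); simp
          omega
  calc G.stp ≤ (sjComponents C₁).card := lg_stp_le hcover
    _ ≤ (sjComponents C).card + 2 := hle
    _ = (G.induce s).stp + 2 := by rw [hcard]

lemma lg_lower (G : LoopGraph V) (v w : V) (hvw : v ≠ w) (hadj : G.Adj v w)
    (huniq : ∀ x, G.Adj v x → x = w) :
    (G.induce ({v, w}ᶜ : Finset V)).stp + 2 ≤ G.stp := by
  classical
  set s : Finset V := ({v, w}ᶜ : Finset V) with hs
  have hvs : v ∉ s := by simp [hs]
  have hws : w ∉ s := by simp [hs]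
  obtain ⟨C, hC, hcard⟩ := lg_stp_mem G
  let g : Finset V → Finset {x // x ∈ s} := fun K => K.subtype (· ∈ s)
  have hg : ∀ (K : Finset V) (a : {x // x ∈ s}), a ∈ g K ↔ ↑a ∈ K := by
    intro K a; simp [g]
  have hkey : ∀ p ∈ C, (v ∈ p.1 → p.2 = {w}) ∧ (v ∈ p.2 → p.1 = {w}) := by
    intro p hp
    constructor
    · intro hv
      have hsub : p.2 ⊆ {w} := by
        intro y hy
        exact Finset.mem_singleton.mpr (huniq y ((hC.2 v y).mpr ⟨p, hp, Or.inl ⟨hv, hy⟩⟩))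
      exact (Finset.subset_singleton_iff.mp hsub).resolve_left
        (Finset.nonempty_iff_ne_empty.mp (hC.1 p hp).2)
    · intro hv
      have hsub : p.1 ⊆ {w} := by
        intro y hy
        exact Finset.mem_singleton.mpr (huniq y ((hC.2 v y).mpr ⟨p, hp, Or.inr ⟨hv, hy⟩⟩))
      exact (Finset.subset_singleton_iff.mp hsub).resolve_left
        (Finset.nonempty_iff_ne_empty.mp (hC.1 p hp).1)
  obtain ⟨p₀, hp₀, hmem₀⟩ := (hC.2 v w).mp hadj
  obtain ⟨K₀, hK₀mem, hvK₀⟩ : ∃ K₀ ∈ sjComponents C, v ∈ K₀ := by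
    rcases hmem₀ with ⟨h1, _⟩ | ⟨h1, _⟩
    · exact ⟨p₀.1, Finset.mem_union_left _ (Finset.mem_image_of_mem _ hp₀), h1⟩
    · exact ⟨p₀.2, Finset.mem_union_right _ (Finset.mem_image_of_mem _ hp₀), h1⟩
  have hwmem : ({w} : Finset V) ∈ sjComponents C := by
    rcases hmem₀ with ⟨h1, _⟩ | ⟨h1, _⟩
    · have := (hkey p₀ hp₀).1 h1
      exact this ▸ Finset.mem_union_right _ (Finset.mem_image_of_mem _ hp₀)
    · have := (hkey p₀ hp₀).2 h1
      exact this ▸ Finset.mem_union_left _ (Finset.mem_image_of_mem _ hp₀)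
  let D : Finset (Finset {x // x ∈ s} × Finset {x // x ∈ s}) :=
    ((C.filter (fun p => v ∉ p.1 ∧ v ∉ p.2)).image (fun p => (g p.1, g p.2))).filter
      (fun p => p.1.Nonempty ∧ p.2.Nonempty)
  have hD : (G.induce s).IsCover D := by
    constructor
    · intro p hp
      exact (Finset.mem_filter.mp hp).2
    · intro a b
      constructor
      · intro h
        have hab : G.Adj ↑a ↑b := h
        obtain ⟨p, hp, hmem⟩ := (hC.2 ↑a ↑b).mp hab
        have hv1 : v ∉ p.1 := by
          intro hv
          have h2 := (hkey p hp).1 hv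
          rcases hmem with ⟨_, hb2⟩ | ⟨hb2, _⟩
          · rw [h2] at hb2
            exact hws (Finset.mem_singleton.mp hb2 ▸ b.2)
          · rw [h2] at hb2
            exact hws (Finset.mem_singleton.mp hb2 ▸ a.2)
        have hv2 : v ∉ p.2 := by
          intro hv
          have h2 := (hkey p hp).2 hv
          rcases hmem with ⟨hb2, _⟩ | ⟨_, hb2⟩
          · rw [h2] at hb2
            exact hws (Finset.mem_singleton.mp hb2 ▸ a.2)
          · rw [h2] at hb2
            exact hws (Finset.mem_singleton.mp hb2 ▸ b.2)
        have hpD : (g p.1, g p.2) ∈ D := by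
          apply Finset.mem_filter.mpr
          refine ⟨Finset.mem_image.mpr ⟨p, Finset.mem_filter.mpr ⟨hp, hv1, hv2⟩, rfl⟩, ?_, ?_⟩
          · rcases hmem with ⟨h1, _⟩ | ⟨_, h1⟩
            · exact ⟨a, (hg _ a).mpr h1⟩
            · exact ⟨b, (hg _ b).mpr h1⟩
          · rcases hmem with ⟨_, h1⟩ | ⟨h1, _⟩
            · exact ⟨b, (hg _ b).mpr h1⟩
            · exact ⟨a, (hg _ a).mpr h1⟩
        refine ⟨(g p.1, g p.2), hpD, ?_⟩
        rcases hmem with ⟨h1, h2⟩ | ⟨h1, h2⟩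
        · exact Or.inl ⟨(hg _ a).mpr h1, (hg _ b).mpr h2⟩
        · exact Or.inr ⟨(hg _ a).mpr h1, (hg _ b).mpr h2⟩
      · rintro ⟨p, hp, hmem⟩
        obtain ⟨q, hq, rfl⟩ := Finset.mem_image.mp (Finset.mem_filter.mp hp).1
        have hqC := (Finset.mem_filter.mp hq).1
        rcases hmem with ⟨h1, h2⟩ | ⟨h1, h2⟩
        · exact (hC.2 ↑a ↑b).mpr ⟨q, hqC, Or.inl ⟨(hg _ a).mp h1, (hg _ b).mp h2⟩⟩
        · exact (hC.2 ↑a ↑b).mpr ⟨q, hqC, Or.inr ⟨(hg _ a).mp h1, (hg _ b).mp h2⟩⟩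
  let T : Finset (Finset V) := (sjComponents C).filter (fun K => v ∉ K ∧ (g K).Nonempty)
  have hDcomp : sjComponents D ⊆ T.image g := by
    intro K hK
    rcases Finset.mem_union.mp hK with hK | hK
    · obtain ⟨p, hp, rfl⟩ := Finset.mem_image.mp hK
      have hp' := Finset.mem_filter.mp hp
      obtain ⟨q, hq, rfl⟩ := Finset.mem_image.mp hp'.1
      have hq' := Finset.mem_filter.mp hq
      exact Finset.mem_image_of_mem _ (Finset.mem_filter.mpr
        ⟨Finset.mem_union_left _ (Finset.mem_image_of_mem _ hq'.1), hq'.2.1, hp'.2.1⟩)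
    · obtain ⟨p, hp, rfl⟩ := Finset.mem_image.mp hK
      have hp' := Finset.mem_filter.mp hp
      obtain ⟨q, hq, rfl⟩ := Finset.mem_image.mp hp'.1
      have hq' := Finset.mem_filter.mp hq
      exact Finset.mem_image_of_mem _ (Finset.mem_filter.mpr
        ⟨Finset.mem_union_right _ (Finset.mem_image_of_mem _ hq'.1), hq'.2.2, hp'.2.2⟩)
  have hwT : ({w} : Finset V) ∉ T := by
    intro h
    obtain ⟨a, ha⟩ := (Finset.mem_filter.mp h).2.2
    exact hws (Finset.mem_singleton.mp ((hg _ a).mp ha) ▸ a.2)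
  have hK₀T : K₀ ∉ T := fun h => (Finset.mem_filter.mp h).2.1 hvK₀
  have hne : ({w} : Finset V) ≠ K₀ := by
    intro h
    rw [← h] at hvK₀
    exact hvw (Finset.mem_singleton.mp hvK₀)
  have hcardT : T.card + 2 ≤ (sjComponents C).card := by
    have hsub : insert ({w} : Finset V) (insert K₀ T) ⊆ sjComponents C := by
      intro K hK
      rcases Finset.mem_insert.mp hK with rfl | hK
      · exact hwmem
      rcases Finset.mem_insert.mp hK with rfl | hK
      · exact hK₀mem
      · exact Finset.filter_subset _ _ hK
    have h1 : (insert ({w} : Finset V) (insert K₀ T)).card = T.card + 2 := by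
      rw [Finset.card_insert_of_notMem (by simp [hne, hwT]),
        Finset.card_insert_of_notMem hK₀T]
    calc T.card + 2 = (insert ({w} : Finset V) (insert K₀ T)).card := h1.symm
      _ ≤ (sjComponents C).card := Finset.card_le_card hsub
  calc (G.induce s).stp + 2 ≤ (sjComponents D).card + 2 := by
        exact Nat.add_le_add_right (lg_stp_le hD) 2
    _ ≤ (T.image g).card + 2 := Nat.add_le_add_right (Finset.card_le_card hDcomp) 2
    _ ≤ T.card + 2 := Nat.add_le_add_right Finset.card_image_le 2
    _ ≤ (sjComponents C).card := hcardT
    _ = G.stp := hcard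

end Aux

/-- If `v` is a leaf (degree 1) with unique neighbour `w`, and `H`
is obtained from `G` by deleting `v` and `w`, then `gap G = gap H`, i.e.
`stp G = stp H + 2`. -/
theorem stmt_3 {V : Type*} [Fintype V] [DecidableEq V] (G : LoopGraph V)
    (v w : V) (hvw : v ≠ w) (hadj : G.Adj v w)
    (huniq : ∀ x, G.Adj v x → x = w) :
    G.gap = (G.induce ({v, w}ᶜ : Finset V)).gap ∧
    G.stp = (G.induce ({v, w}ᶜ : Finset V)).stp + 2 := by
  classical
  have hstp : G.stp = (G.induce ({v, w}ᶜ : Finset V)).stp + 2 :=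
    le_antisymm (lg_upper G v w hvw hadj huniq) (lg_lower G v w hvw hadj huniq)
  refine ⟨?_, hstp⟩
  have hcards : Fintype.card {x // x ∈ ({v, w}ᶜ : Finset V)} = Fintype.card V - 2 := by
    rw [Fintype.card_coe, Finset.card_compl]
    congr 1
    rw [Finset.card_insert_of_notMem (by simp [hvw]), Finset.card_singleton]
  show Fintype.card V - G.stp = Fintype.card {x // x ∈ ({v, w}ᶜ : Finset V)} -
    (G.induce ({v, w}ᶜ : Finset V)).stp
  rw [hstp, hcards]
  omega
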